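/- Define $U(y) = \frac{1}{G + q y}(-A q c y^2 + A q y + E q c y - E q)$ for $y > 0$, where $G = \sum_{l \ne j} q_l y_l > 0$, $A > 0$, $E > 0$, $c > 0$, $q > 0$ are constants. Then the second derivative satisfies $U''(y) = \frac{-2q}{(G + qy)^3}\left[cA G^2 + (Aq + Eqc)G + Eq^2\right] < 0$, so $U$ is strictly concave in $y$. -/

import Mathlib

/-- For `U(y) = (−Aqc y² + Aq y + Eqc y − Eq)/(G + q y)` with
`G, A, E, c, q > 0`, the second derivative equals
`−2q/(G+qy)³ [cAG² + (Aq+Eqc)G + Eq²] < 0`, so `U` is strictly concave on `y > 0`. -/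
theorem stmt_6 (G A E c q : ℝ) (hG : 0 < G) (hA : 0 < A) (hE : 0 < E)
    (hc : 0 < c) (hq : 0 < q) :
    (∀ y : ℝ, 0 < y →
      deriv (deriv (fun y : ℝ =>
        (1 / (G + q * y)) * (-A * q * c * y ^ 2 + A * q * y + E * q * c * y - E * q))) y
        = -2 * q / (G + q * y) ^ 3 * (c * A * G ^ 2 + (A * q + E * q * c) * G + E * q ^ 2) ∧
      deriv (deriv (fun y : ℝ =>
        (1 / (G + q * y)) * (-A * q * c * y ^ 2 + A * q * y + E * q * c * y - E * q))) y < 0) ∧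
    StrictConcaveOn ℝ (Set.Ioi (0 : ℝ))
      (fun y : ℝ =>
        (1 / (G + q * y)) * (-A * q * c * y ^ 2 + A * q * y + E * q * c * y - E * q)) := by
  set S := c * A * G ^ 2 + (A * q + E * q * c) * G + E * q ^ 2 with hSdef
  have hSpos : 0 < S := by positivity
  set f : ℝ → ℝ := fun y =>
    (1 / (G + q * y)) * (-A * q * c * y ^ 2 + A * q * y + E * q * c * y - E * q) with hfdef
  set f1 : ℝ → ℝ := fun y => -A * c + S / (G + q * y) ^ 2 with hf1def
  -- denominator derivative
  have hden : ∀ y : ℝ, HasDerivAt (fun y : ℝ => G + q * y) q y := by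
    intro y
    exact ((hasDerivAt_const y G).add ((hasDerivAt_id y).const_mul q)).congr_deriv (by ring)
  have hU : ∀ y : ℝ, 0 < G + q * y → HasDerivAt f (f1 y) y := by
    intro y hy
    have hne : G + q * y ≠ 0 := ne_of_gt hy
    have h2 : HasDerivAt (fun y : ℝ => (G + q * y)⁻¹) (-q / (G + q * y) ^ 2) y :=
      (hden y).inv hne
    have h3 : HasDerivAt
        (fun y : ℝ => -A * q * c * y ^ 2 + A * q * y + E * q * c * y - E * q)
        (-A * q * c * (2 * y) + A * q + E * q * c) y := by
      have := (((((hasDerivAt_pow 2 y).const_mul (-A * q * c)).add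
        ((hasDerivAt_id y).const_mul (A * q))).add
        ((hasDerivAt_id y).const_mul (E * q * c))).sub (hasDerivAt_const y (E * q)))
      convert this using 1
      · rfl
      · rfl
      · rfl
      push_cast
      ring
    have hmul := h2.mul h3
    have heq : (fun y : ℝ => (G + q * y)⁻¹ *
        (-A * q * c * y ^ 2 + A * q * y + E * q * c * y - E * q)) = f := by
      funext z; simp [hfdef, one_div]
    rw [show ((fun y : ℝ => (G + q * y)⁻¹) * fun y : ℝ =>
        -A * q * c * y ^ 2 + A * q * y + E * q * c * y - E * q) = f from heq] at hmul
    convert hmul using 1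
    · rfl
    · rfl
    simp only [hf1def, hSdef]
    field_simp
    ring
  have hU2 : ∀ y : ℝ, 0 < G + q * y →
      HasDerivAt f1 (-2 * q / (G + q * y) ^ 3 * S) y := by
    intro y hy
    have hne : (G + q * y) ^ 2 ≠ 0 := pow_ne_zero 2 (ne_of_gt hy)
    have hp : HasDerivAt (fun y : ℝ => (G + q * y) ^ 2)
        ((2 : ℕ) * (G + q * y) ^ 1 * q) y := (hden y).pow 2
    have hd := (hasDerivAt_const y S).div hp hne
    have := (hasDerivAt_const y (-A * c)).add hd
    convert this using 1
    · rfl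
    · rfl
    · rfl
    have hne3 : G + q * y ≠ 0 := ne_of_gt hy
    field_simp
    ring
  -- open set where things are nice
  have hopen : IsOpen {y : ℝ | 0 < G + q * y} :=
    isOpen_lt continuous_const (continuous_const.add (continuous_const.mul continuous_id))
  have hderiv_f : ∀ y : ℝ, 0 < G + q * y → deriv f y = f1 y := fun y hy => (hU y hy).deriv
  have hderiv2 : ∀ y : ℝ, 0 < G + q * y →
      deriv (deriv f) y = -2 * q / (G + q * y) ^ 3 * S := by
    intro y hy
    have hev : deriv f =ᶠ[nhds y] f1 :=
      Filter.eventuallyEq_of_mem (hopen.mem_nhds hy) (fun z hz => hderiv_f z hz)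
    rw [hev.deriv_eq]
    exact (hU2 y hy).deriv
  have hpos : ∀ y : ℝ, 0 < y → 0 < G + q * y := fun y hy => by positivity
  constructor
  · intro y hy
    have h := hderiv2 y (hpos y hy)
    refine ⟨h, ?_⟩
    rw [h]
    have hD : 0 < (G + q * y) ^ 3 := by positivity
    exact mul_neg_of_neg_of_pos (div_neg_of_neg_of_pos (by linarith) hD) hSpos
  · apply strictConcaveOn_of_deriv2_neg (convex_Ioi 0)
    · apply ContinuousOn.mul
      · apply ContinuousOn.div continuousOn_const
          ((continuous_const.add (continuous_const.mul continuous_id)).continuousOn)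
        intro y hy
        exact ne_of_gt (hpos y hy)
      · exact Continuous.continuousOn (by fun_prop)
    · intro y hy
      rw [interior_Ioi] at hy
      have hy' : 0 < y := hy
      have hD : 0 < (G + q * y) ^ 3 := by positivity
      have := hderiv2 y (hpos y hy)
      simp only [Function.iterate_succ, Function.iterate_zero, Function.comp_apply, id_eq]
      rw [show deriv (deriv f) y = _ from this]
      exact mul_neg_of_neg_of_pos (div_neg_of_neg_of_pos (by linarith) hD) hSpos
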